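/- Let B ⊂ A be an inclusion of simple unital C*-algebras with a conditional expectation of index-finite type. Then the bilinear form ⟨x,w⟩_NV = dτ⁻² tr(x e_2 e_1 w), for x ∈ P and w ∈ Q, is a non-degenerate duality between P and Q: if ⟨x,w⟩_NV = 0 for all x ∈ P then w = 0, and if ⟨x,w⟩_NV = 0 for all w ∈ Q then x = 0. -/

import Mathlib

open scoped TensorProduct

noncomputable section

/-- A unital C*-algebra is *simple* if it has no nontrivial closed two-sided ideals. -/
def IsSimpleCStarAlgebra (A : Type*) [Ring A] [TopologicalSpace A] : Prop :=
  ∀ I : TwoSidedIdeal A, IsClosed (I : Set A) → I = ⊥ ∨ I = ⊤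

/-- A conditional expectation from the subalgebra `A` of the ambient algebra `C`
onto its subalgebra `B`, recorded as a linear map on `C`. -/
structure CondExpOn (C : Type*) [CStarAlgebra C] (A B : StarSubalgebra ℂ C) where
  map : C →ₗ[ℂ] C
  mem_of_mem : ∀ x ∈ A, map x ∈ B
  fixes : ∀ x ∈ B, map x = x
  bimodule : ∀ b ∈ B, ∀ b' ∈ B, ∀ x ∈ A, map (b * x * b') = b * map x * b'
  star_map : ∀ x ∈ A, map (star x) = star (map x)
  positive : ∀ x ∈ A, ∃ y ∈ B, map (star x * x) = star y * y

/-- A (Watatani) quasi-basis for an expectation-like map `E` on the set `S`: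
`∑ᵢ uᵢ E(uᵢ* y) = y = ∑ᵢ E(y uᵢ) uᵢ*` for all `y ∈ S`.  The existence of a quasi-basis
is the statement that the corresponding conditional expectation is of index-finite type. -/
structure IsQuasiBasisOn {C : Type*} [CStarAlgebra C] (E : C →ₗ[ℂ] C) (S : Set C)
    {n : ℕ} (u : Fin n → C) : Prop where
  mem : ∀ i, u i ∈ S
  left : ∀ y ∈ S, ∑ i, u i * E (star (u i) * y) = y
  right : ∀ y ∈ S, ∑ i, E (y * u i) * star (u i) = y

/-- The relative commutant `M' ∩ N` inside the ambient algebra `C`. -/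
def relativeCommutant {C : Type*} [CStarAlgebra C] (M N : StarSubalgebra ℂ C) :
    Submodule ℂ C where
  carrier := {x | x ∈ N ∧ ∀ m ∈ M, m * x = x * m}
  add_mem' := fun hx hy => ⟨add_mem hx.1 hy.1,
    fun m hm => by rw [mul_add, add_mul, hx.2 m hm, hy.2 m hm]⟩
  zero_mem' := ⟨zero_mem _, fun m _ => by rw [mul_zero, zero_mul]⟩
  smul_mem' := fun c x hx => ⟨SMulMemClass.smul_mem c hx.1,
    fun m hm => by rw [mul_smul_comm, smul_mul_assoc, hx.2 m hm]⟩

/-- The pairing of two linear functionals against a tensor: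
`pairT f g (a ⊗ b) = f a * g b`. -/
def pairT {C : Type*} [CStarAlgebra C] (f g : C →ₗ[ℂ] ℂ) : C ⊗[ℂ] C →ₗ[ℂ] ℂ :=
  (TensorProduct.lid ℂ ℂ).toLinearMap ∘ₗ TensorProduct.map f g

/-- `(ε ⊗ id)` applied to a tensor. -/
def counitL {C : Type*} [CStarAlgebra C] (ε : C →ₗ[ℂ] ℂ) : C ⊗[ℂ] C →ₗ[ℂ] C :=
  (TensorProduct.lid ℂ C).toLinearMap ∘ₗ TensorProduct.map ε LinearMap.id

/-- `(id ⊗ ε)` applied to a tensor. -/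
def counitR {C : Type*} [CStarAlgebra C] (ε : C →ₗ[ℂ] ℂ) : C ⊗[ℂ] C →ₗ[ℂ] C :=
  (TensorProduct.rid ℂ C).toLinearMap ∘ₗ TensorProduct.map LinearMap.id ε

/-- Sweedler expression `t ↦ ε(t₍₁₎ w) t₍₂₎`; applied to `Δ(1)` this is the
target counital map `ε^t(w) = ε(1₍₁₎ w) 1₍₂₎`. -/
def ctarget {C : Type*} [CStarAlgebra C] (ε : C →ₗ[ℂ] ℂ) (w : C) : C ⊗[ℂ] C →ₗ[ℂ] C :=
  (TensorProduct.lid ℂ C).toLinearMap ∘ₗ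
    TensorProduct.map (ε ∘ₗ LinearMap.mulRight ℂ w) LinearMap.id

/-- Sweedler expression `t ↦ t₍₁₎ ε(w t₍₂₎)`; applied to `Δ(1)` this is the
source counital map `ε^s(w) = 1₍₁₎ ε(w 1₍₂₎)`. -/
def csource {C : Type*} [CStarAlgebra C] (ε : C →ₗ[ℂ] ℂ) (w : C) : C ⊗[ℂ] C →ₗ[ℂ] C :=
  (TensorProduct.rid ℂ C).toLinearMap ∘ₗ
    TensorProduct.map LinearMap.id (ε ∘ₗ LinearMap.mulLeft ℂ w)

/-- The tower `B ⊆ A ⊆ A₁ ⊆ A₂` of iterated C*-basic constructions associated to an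
inclusion `B ⊆ A` of simple unital C*-algebras (all realized inside an ambient unital
C*-algebra `C`), together with:  the minimal conditional expectations `E₀ : A → B`,
`E₁ : A₁ → A`, `E₂ : A₂ → A₁`, all of index-finite type;  a quasi-basis `lam` for `E₀`
with scalar index `τ⁻¹` (minimal, i.e. of smallest index);  the Jones projections
`e₁, e₂`;  the Markov-type trace `tr` given on `B' ∩ A₂` by `E₀ ∘ E₁ ∘ E₂`;  and a
quasi-basis `u` for the restriction of `E₁` to the relative commutant `A' ∩ A₁`, whose
Watatani index `k = ∑ uᵢuᵢ*` is invertible with inverse `kinv`. -/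
structure JonesTower (C : Type*) [CStarAlgebra C] where
  B : StarSubalgebra ℂ C
  A : StarSubalgebra ℂ C
  A1 : StarSubalgebra ℂ C
  A2 : StarSubalgebra ℂ C
  hBA : B ≤ A
  hAA1 : A ≤ A1
  hA1A2 : A1 ≤ A2
  simpleB : IsSimpleCStarAlgebra B
  simpleA : IsSimpleCStarAlgebra A
  E0 : CondExpOn C A B
  E1 : CondExpOn C A1 A
  E2 : CondExpOn C A2 A1
  τ : ℝ
  τ_pos : 0 < τ
  nl : ℕ
  lam : Fin nl → C
  lam_qb : IsQuasiBasisOn E0.map (A : Set C) lam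
  qb1 : ∃ (n : ℕ) (v : Fin n → C), IsQuasiBasisOn E1.map (A1 : Set C) v
  qb2 : ∃ (n : ℕ) (v : Fin n → C), IsQuasiBasisOn E2.map (A2 : Set C) v
  lam_index : ∑ i, lam i * star (lam i) = ((τ⁻¹ : ℝ) : ℂ) • 1
  E0_minimal : ∀ (E' : CondExpOn C A B) (n : ℕ) (v : Fin n → C) (c : ℝ),
      IsQuasiBasisOn E'.map (A : Set C) v →
      (∑ i, v i * star (v i)) = ((c : ℝ) : ℂ) • 1 → τ⁻¹ ≤ c
  e1 : C
  e2 : C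
  e1_mem : e1 ∈ A1
  e2_mem : e2 ∈ A2
  e1_star : star e1 = e1
  e2_star : star e2 = e2
  e1_idem : e1 * e1 = e1
  e2_idem : e2 * e2 = e2
  e1_comm : ∀ b ∈ B, e1 * b = b * e1
  e2_comm : ∀ a ∈ A, e2 * a = a * e2
  e1_jones : ∀ x ∈ A, e1 * x * e1 = E0.map x * e1
  e2_jones : ∀ x ∈ A1, e2 * x * e2 = E1.map x * e2
  E1_e1 : E1.map e1 = ((τ : ℝ) : ℂ) • 1
  E2_e2 : E2.map e2 = ((τ : ℝ) : ℂ) • 1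
  gen1 : A1 = (StarAlgebra.adjoin ℂ ((A : Set C) ∪ {e1})).topologicalClosure
  gen2 : A2 = (StarAlgebra.adjoin ℂ ((A1 : Set C) ∪ {e2})).topologicalClosure
  tr : C →ₗ[ℂ] ℂ
  tr_def : ∀ x ∈ A2, (∀ b ∈ B, b * x = x * b) →
      E0.map (E1.map (E2.map x)) = tr x • 1
  nu : ℕ
  u : Fin nu → C
  u_qb : IsQuasiBasisOn E1.map {x | x ∈ A1 ∧ ∀ a ∈ A, a * x = x * a} u
  kinv : C
  kinv_k : kinv * (∑ i, u i * star (u i)) = 1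
  k_kinv : (∑ i, u i * star (u i)) * kinv = 1

namespace JonesTower

variable {C : Type*} [CStarAlgebra C] (T : JonesTower C)

/-- The relative commutant `P = B' ∩ A₁`. -/
def P : Submodule ℂ C := relativeCommutant T.B T.A1

/-- The relative commutant `Q = A' ∩ A₂`. -/
def Q : Submodule ℂ C := relativeCommutant T.A T.A2

/-- `k = Ind_W (E₁|_{A' ∩ A₁}) = ∑ᵢ uᵢ uᵢ*`, the Watatani index of the restriction of
`E₁` to `A' ∩ A₁`. -/
def k : C := ∑ i, T.u i * star (T.u i)

/-- `d = ‖k‖₂ = tr(k* k)^{1/2}`. -/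
def d : ℝ := Real.sqrt (T.tr (star T.k * T.k)).re

/-- The Nikshych–Vainerman pairing `⟨x, w⟩ = d τ⁻² tr(x e₂ e₁ w)`. -/
def pairNV (x w : C) : ℂ :=
  (T.d : ℂ) * ((T.τ : ℂ)⁻¹) ^ 2 * T.tr (x * T.e2 * T.e1 * w)

/-- The NV pairing as a linear functional in its second variable. -/
def pairL (x : C) : C →ₗ[ℂ] ℂ :=
  ((T.d : ℂ) * ((T.τ : ℂ)⁻¹) ^ 2) • (T.tr ∘ₗ LinearMap.mulLeft ℂ (x * T.e2 * T.e1))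

/-- The NV pairing as a linear functional in its first variable. -/
def pairR (w : C) : C →ₗ[ℂ] ℂ :=
  ((T.d : ℂ) * ((T.τ : ℂ)⁻¹) ^ 2) • (T.tr ∘ₗ LinearMap.mulRight ℂ (T.e2 * (T.e1 * w)))

/-- The subspace `Q ⊗ Q` of `C ⊗ C`. -/
def QQ : Submodule ℂ (C ⊗[ℂ] C) :=
  Submodule.span ℂ {t | ∃ a ∈ T.Q, ∃ b ∈ T.Q, t = a ⊗ₜ[ℂ] b}

/-- The subspace `P ⊗ P` of `C ⊗ C`. -/
def PP : Submodule ℂ (C ⊗[ℂ] C) :=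
  Submodule.span ℂ {t | ∃ a ∈ T.P, ∃ b ∈ T.P, t = a ⊗ₜ[ℂ] b}

/-- The reflection operator `r⁻₁(w) = τ⁻² ∑ᵢ λᵢ e₁ e₂ E₂(w e₁ e₂ λᵢ*)`. -/
def rminus (w : C) : C :=
  (((T.τ : ℂ)⁻¹) ^ 2) •
    ∑ i, T.lam i * T.e1 * T.e2 * T.E2.map (w * T.e1 * T.e2 * star (T.lam i))

/-- The reflection operator `r⁺₁(x) = τ⁻¹ ∑ᵢ E₁(e₁ λᵢ x) e₁ λᵢ*`. -/
def rplus (x : C) : C :=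
  ((T.τ : ℂ)⁻¹) • ∑ i, T.E1.map (T.e1 * T.lam i * x) * T.e1 * star (T.lam i)

/-- The inclusion `B ⊆ A` has depth 2: `(B' ∩ A₁) e₂ (B' ∩ A₁) = B' ∩ A₂`
(as linear spans). -/
def DepthTwo : Prop :=
  Submodule.span ℂ {z | ∃ x ∈ T.P, ∃ y ∈ T.P, z = x * T.e2 * y} =
    relativeCommutant T.B T.A2

/-- The comultiplication, counit and antipode on `Q = A' ∩ A₂` determined by the
Nikshych–Vainerman pairing:  `⟨x₁x₂, w⟩ = ⟨x₁, w₍₁₎⟩⟨x₂, w₍₂₎⟩`,  `ε(w) = ⟨1, w⟩`, and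
`⟨x, S(w)⟩ = conj ⟨x*, w*⟩`. -/
structure NVData where
  Δ : C →ₗ[ℂ] C ⊗[ℂ] C
  ε : C →ₗ[ℂ] ℂ
  S : C →ₗ[ℂ] C
  Δ_mem : ∀ w ∈ T.Q, Δ w ∈ T.QQ
  S_mem : ∀ w ∈ T.Q, S w ∈ T.Q
  Δ_pair : ∀ x₁ ∈ T.P, ∀ x₂ ∈ T.P, ∀ w ∈ T.Q,
      T.pairNV (x₁ * x₂) w = pairT (T.pairL x₁) (T.pairL x₂) (Δ w)
  ε_pair : ∀ w ∈ T.Q, ε w = T.pairNV 1 w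
  S_pair : ∀ x ∈ T.P, ∀ w ∈ T.Q,
      T.pairNV x (S w) = starRingEnd ℂ (T.pairNV (star x) (star w))

variable {T}

/-- The deformed comultiplication `Δ̃(w) = d (1 ⊗ k⁻¹) Δ(w)`. -/
def tΔ (D : T.NVData) : C →ₗ[ℂ] C ⊗[ℂ] C :=
  (T.d : ℂ) • ((LinearMap.mulLeft ℂ ((1 : C) ⊗ₜ[ℂ] T.kinv)) ∘ₗ D.Δ)

/-- The deformed counit `ε̃(w) = d⁻¹ ε(k w)`. -/
def tε (D : T.NVData) : C →ₗ[ℂ] ℂ :=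
  ((T.d : ℂ))⁻¹ • (D.ε ∘ₗ LinearMap.mulLeft ℂ T.k)

/-- The deformed antipode `S̃(w) = S(k w k⁻¹)`. -/
def tS (D : T.NVData) : C →ₗ[ℂ] C :=
  D.S ∘ₗ (LinearMap.mulRight ℂ T.kinv ∘ₗ LinearMap.mulLeft ℂ T.k)

end JonesTower

/-- `(Q, Δ, ε, S)` is a weak C*-Hopf algebra, where `Q` is a (necessarily
finite-dimensional) subspace of the ambient C*-algebra `C`, `dag` is the involution of
`Q` and `dagT` is the induced componentwise involution of `Q ⊗ Q`.  This records:
`Q` is a unital algebra, `dag` is an (isometrically positive-definite, i.e. C*-)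
involution, `Δ` is a `dag`-preserving algebra map, `(Q, Δ, ε)` is a coalgebra,
the weak bialgebra axioms for `ε` and `Δ(1)`, and the antipode axioms for `S`. -/
structure IsWeakCStarHopfOn {C : Type*} [CStarAlgebra C]
    (Qc : Submodule ℂ C) (QQc : Submodule ℂ (C ⊗[ℂ] C))
    (dag : C →ₛₗ[starRingEnd ℂ] C) (dagT : C ⊗[ℂ] C → C ⊗[ℂ] C)
    (Δ : C →ₗ[ℂ] C ⊗[ℂ] C) (ε : C →ₗ[ℂ] ℂ) (S : C →ₗ[ℂ] C) : Prop where
  one_mem : (1 : C) ∈ Qc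
  mul_mem : ∀ w ∈ Qc, ∀ w' ∈ Qc, w * w' ∈ Qc
  findim : FiniteDimensional ℂ Qc
  dag_mem : ∀ w ∈ Qc, dag w ∈ Qc
  dag_invol : ∀ w ∈ Qc, dag (dag w) = w
  dag_mul : ∀ w ∈ Qc, ∀ w' ∈ Qc, dag (w * w') = dag w' * dag w
  dag_cstar : ∀ w ∈ Qc, dag w * w = 0 → w = 0
  Δ_mem : ∀ w ∈ Qc, Δ w ∈ QQc
  S_mem : ∀ w ∈ Qc, S w ∈ Qc
  Δ_mul : ∀ w ∈ Qc, ∀ w' ∈ Qc, Δ (w * w') = Δ w * Δ w'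
  Δ_star : ∀ w ∈ Qc, Δ (dag w) = dagT (Δ w)
  coassoc : ∀ w ∈ Qc,
      (TensorProduct.assoc ℂ C C C) ((TensorProduct.map Δ LinearMap.id) (Δ w))
        = (TensorProduct.map LinearMap.id Δ) (Δ w)
  counit_left : ∀ w ∈ Qc, counitL ε (Δ w) = w
  counit_right : ∀ w ∈ Qc, counitR ε (Δ w) = w
  eps_weak : ∀ w ∈ Qc, ∀ w' ∈ Qc, ∀ w'' ∈ Qc,
      ε (w * w' * w'') =
        pairT (ε ∘ₗ LinearMap.mulLeft ℂ w) (ε ∘ₗ LinearMap.mulRight ℂ w'') (Δ w')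
  eps_weak' : ∀ w ∈ Qc, ∀ w' ∈ Qc, ∀ w'' ∈ Qc,
      ε (w * w' * w'') =
        pairT (ε ∘ₗ LinearMap.mulRight ℂ w'') (ε ∘ₗ LinearMap.mulLeft ℂ w) (Δ w')
  delta_one_left :
      (TensorProduct.assoc ℂ C C C).symm ((TensorProduct.map LinearMap.id Δ) (Δ 1))
        = ((Δ 1) ⊗ₜ[ℂ] (1 : C)) *
            ((TensorProduct.assoc ℂ C C C).symm ((1 : C) ⊗ₜ[ℂ] (Δ 1)))
  delta_one_right :
      (TensorProduct.assoc ℂ C C C).symm ((TensorProduct.map LinearMap.id Δ) (Δ 1))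
        = ((TensorProduct.assoc ℂ C C C).symm ((1 : C) ⊗ₜ[ℂ] (Δ 1))) *
            ((Δ 1) ⊗ₜ[ℂ] (1 : C))
  antipode_left : ∀ w ∈ Qc,
      LinearMap.mul' ℂ C ((TensorProduct.map LinearMap.id S) (Δ w)) = ctarget ε w (Δ 1)
  antipode_right : ∀ w ∈ Qc,
      LinearMap.mul' ℂ C ((TensorProduct.map S LinearMap.id) (Δ w)) = csource ε w (Δ 1)
  antipode_mid : ∀ w ∈ Qc,
      LinearMap.mul' ℂ C
        ((TensorProduct.map (LinearMap.mul' ℂ C ∘ₗ TensorProduct.map S LinearMap.id) S)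
          ((TensorProduct.map Δ LinearMap.id) (Δ w))) = S w

/-- A left action of a weak C*-Hopf algebra `(Hc, Δ, ε, S, dag)` (realized inside the
ambient algebra `C`) on the C*-subalgebra `Ac`, given as a bilinear map `act`. -/
structure IsWeakHopfActionOn {C : Type*} [CStarAlgebra C]
    (Hc : Submodule ℂ C) (Ac : StarSubalgebra ℂ C)
    (Δ : C →ₗ[ℂ] C ⊗[ℂ] C) (ε : C →ₗ[ℂ] ℂ) (S : C →ₗ[ℂ] C) (dag : C → C)
    (act : C →ₗ[ℂ] C →ₗ[ℂ] C) : Prop where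
  act_mem : ∀ y ∈ Hc, ∀ a ∈ Ac, act y a ∈ Ac
  one_act : ∀ a ∈ Ac, act 1 a = a
  mul_act : ∀ y ∈ Hc, ∀ y' ∈ Hc, ∀ a ∈ Ac, act (y * y') a = act y (act y' a)
  leibniz : ∀ y ∈ Hc, ∀ a ∈ Ac, ∀ a' ∈ Ac,
      act y (a * a') =
        LinearMap.mul' ℂ C ((TensorProduct.map (act.flip a) (act.flip a')) (Δ y))
  star_act : ∀ y ∈ Hc, ∀ a ∈ Ac, star (act y a) = act (dag (S y)) (star a)
  unit_act : ∀ y ∈ Hc, act y 1 = act (ctarget ε y (Δ 1)) 1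
  unit_act_zero : ∀ y ∈ Hc, (act y 1 = 0 ↔ ctarget ε y (Δ 1) = 0)
/-- The conjugate-linear involution `w ↦ gi (star w) g` of `C` (for `gi = g⁻¹` this is
the involution `w† = g⁻¹ w* g`). -/
def conjStar {C : Type*} [CStarAlgebra C] (g gi : C) : C →ₛₗ[starRingEnd ℂ] C where
  toFun w := gi * star w * g
  map_add' w w' := by rw [star_add, mul_add, add_mul]
  map_smul' c w := by
    simp only [star_smul, mul_smul_comm, smul_mul_assoc, starRingEnd_apply]

/-- The map `(x, a) ↦ x₍₁₎ a S(x₍₂₎)`, as a bilinear map, built from a comultiplication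
`Δ` and an antipode `S`. -/
def hopfAct {C : Type*} [CStarAlgebra C] (Δ : C →ₗ[ℂ] C ⊗[ℂ] C) (S : C →ₗ[ℂ] C) :
    C →ₗ[ℂ] C →ₗ[ℂ] C :=
  LinearMap.mk₂ ℂ
    (fun x a =>
      LinearMap.mul' ℂ C ((TensorProduct.map ((LinearMap.mul ℂ C).flip a) S) (Δ x)))
    (fun x x' a => by simp)
    (fun c x a => by simp)
    (fun x a a' => by simp [TensorProduct.map_add_left])
    (fun c x a => by simp [TensorProduct.map_smul_left])

namespace JonesTower

variable {C : Type*} [CStarAlgebra C]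

/-- The action `w ▷ x = τ⁻¹ E₂(w x e₂)` of `Q = A' ∩ A₂` on `A₁`, as a bilinear map. -/
def qact (T : JonesTower C) : C →ₗ[ℂ] C →ₗ[ℂ] C :=
  LinearMap.mk₂ ℂ (fun w x => (T.τ : ℂ)⁻¹ • T.E2.map (w * x * T.e2))
    (fun w w' x => by rw [add_mul, add_mul, map_add, smul_add])
    (fun c w x => by rw [smul_mul_assoc, smul_mul_assoc, map_smul, smul_comm])
    (fun w x x' => by rw [mul_add, add_mul, map_add, smul_add])
    (fun c w x => by rw [mul_smul_comm, smul_mul_assoc, map_smul, smul_comm])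

/-- The weak C*-Hopf algebra structure `(Δ_P, ε_P, S_P)` on `P = B' ∩ A₁` which is dual,
via the Nikshych–Vainerman pairing, to the deformed weak C*-Hopf algebra structure
`(Q, Δ̃, ε̃, S̃)`:  the multiplication of `P` is dual to `Δ̃`, the comultiplication of `P`
is dual to the multiplication of `Q`, the counit of `P` is evaluation against `1 ∈ Q`,
the unit of `P` pairs as `ε̃`, and the antipode of `P` is dual to `S̃`. -/
structure DualData (T : JonesTower C) (D : T.NVData) where
  ΔP : C →ₗ[ℂ] C ⊗[ℂ] C
  εP : C →ₗ[ℂ] ℂ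
  SP : C →ₗ[ℂ] C
  ΔP_mem : ∀ x ∈ T.P, ΔP x ∈ T.PP
  SP_mem : ∀ x ∈ T.P, SP x ∈ T.P
  mul_dual : ∀ x ∈ T.P, ∀ x' ∈ T.P, ∀ w ∈ T.Q,
      T.pairNV (x * x') w = pairT (T.pairL x) (T.pairL x') (tΔ D w)
  ΔP_dual : ∀ x ∈ T.P, ∀ w ∈ T.Q, ∀ w' ∈ T.Q,
      pairT (T.pairR w) (T.pairR w') (ΔP x) = T.pairNV x (w * w')
  εP_dual : ∀ x ∈ T.P, εP x = T.pairNV x 1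
  one_dual : ∀ w ∈ T.Q, T.pairNV 1 w = tε D w
  SP_dual : ∀ x ∈ T.P, ∀ w ∈ T.Q, T.pairNV (SP x) w = T.pairNV x (tS D w)

end JonesTower

open scoped ComplexOrder

section Statement7Aux

variable {C : Type*} [CStarAlgebra C]

lemma s7_push {b c X : C} (h : b * c = c * b) : b * (c * X) = c * (b * X) := by
  rw [← mul_assoc, h, mul_assoc]

lemma s7_smul_one_inj (h1 : (1 : C) ≠ 0) {a b : ℂ} (h : a • (1 : C) = b • (1 : C)) : a = b := by
  by_contra hne
  have h2 : (a - b) • (1 : C) = 0 := by rw [sub_smul, h, sub_self]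
  have h3 : (1 : C) = 0 := by
    have := congrArg (fun z => (a - b)⁻¹ • z) h2
    simpa [smul_smul, inv_mul_cancel₀ (sub_ne_zero.mpr hne)] using this
  exact h1 h3

lemma s7_rsmul_nonneg [PartialOrder C] [StarOrderedRing C] {p : C} {r : ℝ}
    (hp : ∃ b : C, p = star b * b) (hr : 0 ≤ r) : (0:C) ≤ ((r:ℝ):ℂ) • p := by
  obtain ⟨b, rfl⟩ := hp
  have : ((r:ℝ):ℂ) • (star b * b) = star ((Real.sqrt r : ℂ) • b) * ((Real.sqrt r : ℂ) • b) := by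
    rw [star_smul, smul_mul_assoc, mul_smul_comm, smul_smul, Complex.star_def,
      Complex.conj_ofReal, ← Complex.ofReal_mul, Real.mul_self_sqrt hr]
  rw [this]
  exact star_mul_self_nonneg _

lemma s7_expand_sq (t : ℝ) (α x : C) :
    star ((t:ℂ) • α + x) * ((t:ℂ) • α + x)
      = ((t*t : ℝ):ℂ) • (star α * α) + (((t:ℝ):ℂ) • (star α * x)
        + (((t:ℝ):ℂ) • (star x * α) + star x * x)) := by
  rw [star_add, star_smul, Complex.star_def, Complex.conj_ofReal, add_mul, mul_add, mul_add,
    smul_mul_assoc, smul_mul_assoc, mul_smul_comm, smul_smul, ← add_assoc]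
  push_cast
  ring_nf
  rw [mul_smul_comm, add_assoc, add_assoc]

/-- Faithfulness of a conditional expectation of index-finite type. -/
lemma s7_faith [PartialOrder C] [StarOrderedRing C] {Ac Bc : StarSubalgebra ℂ C}
    (E : CondExpOn C Ac Bc) (hle : Bc ≤ Ac) {n : ℕ} {u : Fin n → C}
    (hqb : IsQuasiBasisOn E.map (Ac : Set C) u) {x : C} (hx : x ∈ Ac)
    (h0 : E.map (star x * x) = 0) : x = 0 := by
  have key : ∀ i, E.map (star (u i) * x) = 0 := by
    intro i
    have hu : u i ∈ Ac := hqb.mem i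
    set b := E.map (star (u i) * x) with hbdef
    have hbB : b ∈ Bc := E.mem_of_mem _ (mul_mem (star_mem hu) hx)
    have hbA : b ∈ Ac := hle hbB
    obtain ⟨y, hyB, hy⟩ := E.positive (u i) hu
    set p := star b * b with hpdef
    set c := star (y * b) * (y * b) with hcdef
    have e1 : E.map (star (u i * b) * (u i * b)) = c := by
      have harg : star (u i * b) * (u i * b) = star b * (star (u i) * u i) * b := by
        rw [star_mul]; simp only [mul_assoc]
      rw [harg, E.bimodule (star b) (star_mem hbB) b hbB _ (mul_mem (star_mem hu) hu), hy,
        hcdef, star_mul]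
      simp only [mul_assoc]
    have e2 : E.map (star (u i * b) * x) = p := by
      have harg : star (u i * b) * x = star b * (star (u i) * x) * 1 := by
        rw [star_mul]; simp only [mul_assoc, mul_one]
      rw [harg, E.bimodule (star b) (star_mem hbB) 1 (one_mem _) _ (mul_mem (star_mem hu) hx)]
      rw [← hbdef, mul_one]
    have e3 : E.map (star x * (u i * b)) = p := by
      have harg : star x * (u i * b) = 1 * (star x * u i) * b := by
        simp only [mul_assoc, one_mul]
      rw [harg, E.bimodule 1 (one_mem _) b hbB _ (mul_mem (star_mem hx) hu)]
      have h2 : E.map (star x * u i) = star b := by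
        have h3 : star x * u i = star (star (u i) * x) := by rw [star_mul, star_star]
        rw [h3, E.star_map _ (mul_mem (star_mem hu) hx), ← hbdef]
      rw [h2, one_mul, ← hpdef]
    have pos : ∀ s : ℝ, 0 < s → ((2*s : ℝ):ℂ) • p ≤ ((s*s : ℝ):ℂ) • c := by
      intro s hs
      have hz : ((-s : ℝ):ℂ) • (u i * b) + x ∈ Ac :=
        add_mem (SMulMemClass.smul_mem _ (mul_mem hu hbA)) hx
      obtain ⟨v, hvB, hv⟩ := E.positive _ hz
      have h1 : E.map (star (((-s : ℝ):ℂ) • (u i * b) + x) * (((-s : ℝ):ℂ) • (u i * b) + x))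
          = ((s*s : ℝ):ℂ) • c - ((2*s : ℝ):ℂ) • p := by
        rw [s7_expand_sq (-s) (u i * b) x]
        rw [map_add, map_add, map_add, map_smul, map_smul, map_smul, e1, e2, e3, h0, add_zero]
        have hneg : ((-s : ℝ)*(-s : ℝ) : ℝ) = (s*s : ℝ) := by ring
        rw [hneg, ← add_smul]
        have : (((-s:ℝ):ℂ) + ((-s:ℝ):ℂ)) = -(((2*s : ℝ):ℂ)) := by push_cast; ring
        rw [this, neg_smul, ← sub_eq_add_neg]
      rw [hv] at h1
      have h4 : (0:C) ≤ ((s*s : ℝ):ℂ) • c - ((2*s : ℝ):ℂ) • p := by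
        rw [← h1]; exact star_mul_self_nonneg v
      exact sub_nonneg.mp h4
    have hbz : b = 0 := by
      by_contra hbne
      have hpnorm : 0 < ‖p‖ := by
        rw [hpdef, CStarRing.norm_star_mul_self]
        have := norm_pos_iff.mpr hbne
        positivity
      have hcnn : (0:ℝ) ≤ ‖c‖ := norm_nonneg _
      have hs : 0 < ‖p‖ / (‖c‖ + 1) := by positivity
      have hle2 := pos _ hs
      have hnn : (0:C) ≤ ((2*(‖p‖ / (‖c‖ + 1)) : ℝ):ℂ) • p :=
        s7_rsmul_nonneg ⟨b, hpdef⟩ (by positivity)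
      have hnorms := CStarAlgebra.norm_le_norm_of_nonneg_of_le hnn hle2
      rw [norm_smul, norm_smul, Complex.norm_real, Complex.norm_real, Real.norm_eq_abs,
        Real.norm_eq_abs, abs_of_pos (by positivity), abs_of_pos (by positivity)] at hnorms
      have hseq : (‖p‖ / (‖c‖ + 1)) * (‖c‖ + 1) = ‖p‖ := by field_simp
      nlinarith [hnorms, hs, hpnorm, hseq, mul_pos hs hpnorm]
    rwa [hbdef] at hbz
  have := hqb.left x hx
  rw [← this]
  apply Finset.sum_eq_zero
  intro i _
  rw [key i, mul_zero]

end Statement7Aux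

namespace JonesTower

variable {C : Type*} [CStarAlgebra C] (T : JonesTower C)

lemma s7_memP {x : C} : x ∈ T.P ↔ x ∈ T.A1 ∧ ∀ b ∈ T.B, b * x = x * b := Iff.rfl

lemma s7_memQ {w : C} : w ∈ T.Q ↔ w ∈ T.A2 ∧ ∀ a ∈ T.A, a * w = w * a := Iff.rfl

lemma s7_starP {x : C} (hx : x ∈ T.P) : star x ∈ T.P := by
  rw [s7_memP] at hx ⊢
  refine ⟨star_mem hx.1, fun b hb => ?_⟩
  have h := congrArg star (hx.2 (star b) (star_mem hb))
  rw [star_mul, star_mul, star_star] at h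
  exact h.symm

lemma s7_tau_ne : ((T.τ : ℝ) : ℂ) ≠ 0 := by
  simp only [ne_eq, Complex.ofReal_eq_zero]
  exact ne_of_gt T.τ_pos

lemma s7_chain01 [PartialOrder C] [StarOrderedRing C] {y : C} (hy : y ∈ T.A1)
    (h : T.E0.map (T.E1.map (star y * y)) = 0) : y = 0 := by
  obtain ⟨nq, vq, hvq⟩ := T.qb1
  obtain ⟨z, hzA, hz⟩ := T.E1.positive y hy
  rw [hz] at h
  have hz0 : z = 0 := s7_faith T.E0 T.hBA T.lam_qb hzA h
  rw [hz0, star_zero, zero_mul] at hz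
  exact s7_faith T.E1 T.hAA1 hvq hy hz

lemma s7_lam_A1 (i : Fin T.nl) : T.lam i ∈ T.A1 := T.hAA1 (T.lam_qb.mem i)

lemma s7_e1_key : ∀ a ∈ T.A, ∀ X : C, T.e1 * (a * (T.e1 * X)) = T.E0.map a * (T.e1 * X) := by
  intro a ha X
  have h := T.e1_jones a ha
  calc T.e1 * (a * (T.e1 * X)) = (T.e1 * a * T.e1) * X := by simp only [mul_assoc]
    _ = (T.E0.map a * T.e1) * X := by rw [h]
    _ = T.E0.map a * (T.e1 * X) := by simp only [mul_assoc]

lemma s7_fsum [PartialOrder C] [StarOrderedRing C] :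
    (∑ i, T.lam i * T.e1 * star (T.lam i)) = 1 := by
  obtain ⟨nq, vq, hvq⟩ := T.qb1
  set f := ∑ i, T.lam i * T.e1 * star (T.lam i) with hf
  have hfA1 : f ∈ T.A1 := by
    refine sum_mem fun i _ => ?_
    exact mul_mem (mul_mem (T.s7_lam_A1 i) T.e1_mem) (star_mem (T.s7_lam_A1 i))
  have hstarf : star f = f := by
    rw [hf, star_sum]
    refine Finset.sum_congr rfl fun i _ => ?_
    rw [star_mul, star_mul, star_star, T.e1_star, mul_assoc]
  have habsorb : ∀ i, (T.lam i * T.e1 * star (T.lam i)) * f = T.lam i * T.e1 * star (T.lam i) := by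
    intro i
    rw [hf, Finset.mul_sum]
    have h1 : ∀ j, (T.lam i * T.e1 * star (T.lam i)) * (T.lam j * T.e1 * star (T.lam j))
        = T.lam i * (T.e1 * (T.E0.map (star (T.lam i) * T.lam j) * star (T.lam j))) := by
      intro j
      have hmem : star (T.lam i) * T.lam j ∈ T.A :=
        mul_mem (star_mem (T.lam_qb.mem i)) (T.lam_qb.mem j)
      have hB : T.E0.map (star (T.lam i) * T.lam j) ∈ T.B := T.E0.mem_of_mem _ hmem
      calc (T.lam i * T.e1 * star (T.lam i)) * (T.lam j * T.e1 * star (T.lam j))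
          = T.lam i * (T.e1 * ((star (T.lam i) * T.lam j) * (T.e1 * star (T.lam j)))) := by
            simp only [mul_assoc]
        _ = T.lam i * (T.E0.map (star (T.lam i) * T.lam j) * (T.e1 * star (T.lam j))) := by
            rw [T.s7_e1_key _ hmem]
        _ = T.lam i * (T.e1 * (T.E0.map (star (T.lam i) * T.lam j) * star (T.lam j))) := by
            rw [s7_push ((T.e1_comm _ hB).symm)]
    calc (∑ j, (T.lam i * T.e1 * star (T.lam i)) * (T.lam j * T.e1 * star (T.lam j)))
        = ∑ j, T.lam i * (T.e1 * (T.E0.map (star (T.lam i) * T.lam j) * star (T.lam j))) :=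
          Finset.sum_congr rfl fun j _ => h1 j
      _ = T.lam i * (T.e1 * (∑ j, T.E0.map ((star (T.lam i)) * T.lam j) * star (T.lam j))) := by
          rw [Finset.mul_sum, Finset.mul_sum]
      _ = T.lam i * (T.e1 * star (T.lam i)) := by
          rw [T.lam_qb.right (star (T.lam i)) (star_mem (T.lam_qb.mem i))]
      _ = T.lam i * T.e1 * star (T.lam i) := by rw [mul_assoc]
  have hidem : f * f = f := by
    conv_lhs => rw [hf, Finset.sum_mul]
    calc (∑ i, (T.lam i * T.e1 * star (T.lam i)) * f) = ∑ i, T.lam i * T.e1 * star (T.lam i) :=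
      Finset.sum_congr rfl fun i _ => habsorb i
    _ = f := hf.symm
  have hE1f : T.E1.map f = 1 := by
    rw [hf, map_sum]
    have h1 : ∀ i, T.E1.map (T.lam i * T.e1 * star (T.lam i))
        = ((T.τ : ℝ) : ℂ) • (T.lam i * star (T.lam i)) := by
      intro i
      rw [T.E1.bimodule (T.lam i) (T.lam_qb.mem i) (star (T.lam i))
        (star_mem (T.lam_qb.mem i)) T.e1 T.e1_mem, T.E1_e1]
      rw [mul_smul_comm, mul_one, smul_mul_assoc]
    rw [Finset.sum_congr rfl fun i _ => h1 i, ← Finset.smul_sum, T.lam_index, smul_smul]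
    rw [← Complex.ofReal_mul, mul_inv_cancel₀ (ne_of_gt T.τ_pos)]
    simp
  have hgz : T.E1.map (star (1 - f) * (1 - f)) = 0 := by
    have hg : (1 - f) * (1 - f) = 1 - f := by
      rw [sub_mul, one_mul, mul_sub, mul_one, hidem]
      abel
    rw [star_sub, star_one, hstarf, hg, map_sub]
    have h1 : T.E1.map 1 = 1 := T.E1.fixes 1 (one_mem _)
    rw [h1, hE1f, sub_self]
  obtain ⟨nq2, vq2, hvq2⟩ := T.qb1
  have := s7_faith T.E1 T.hAA1 hvq2 (sub_mem (one_mem _) hfA1) hgz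
  have hf1 : f = 1 := by
    have h2 := sub_eq_zero.mp this
    exact h2.symm
  exact hf1

lemma s7_e2e1e2 : T.e2 * T.e1 * T.e2 = ((T.τ : ℝ) : ℂ) • T.e2 := by
  have h := T.e2_jones T.e1 T.e1_mem
  rw [T.E1_e1, smul_mul_assoc, one_mul] at h
  exact h

lemma s7_e1e2e1 [PartialOrder C] [StarOrderedRing C] :
    T.e1 * T.e2 * T.e1 = ((T.τ : ℝ) : ℂ) • T.e1 := by
  obtain ⟨nq, vq, hvq⟩ := T.qb2
  set a : ℂ := (((T.τ : ℝ) : ℂ))⁻¹ with ha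
  set u := T.e1 * T.e2 * T.e1 with hu
  set p := T.e1 - a • u with hp
  have hane : a ≠ 0 := inv_ne_zero T.s7_tau_ne
  have he1A2 : T.e1 ∈ T.A2 := T.hA1A2 T.e1_mem
  have huA2 : u ∈ T.A2 := mul_mem (mul_mem he1A2 T.e2_mem) he1A2
  have hpA2 : p ∈ T.A2 := sub_mem he1A2 (SMulMemClass.smul_mem _ huA2)
  have hstaru : star u = u := by
    rw [hu, star_mul, star_mul, T.e1_star, T.e2_star, mul_assoc]
  have hstarp : star p = p := by
    rw [hp, star_sub, T.e1_star, star_smul, hstaru]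
    congr 1
    simp [ha, Complex.star_def, map_inv₀, Complex.conj_ofReal]
  have he1u : T.e1 * u = u := by
    rw [hu]
    calc T.e1 * (T.e1 * T.e2 * T.e1) = (T.e1 * T.e1) * T.e2 * T.e1 := by simp only [mul_assoc]
      _ = T.e1 * T.e2 * T.e1 := by rw [T.e1_idem]
  have hue1 : u * T.e1 = u := by
    rw [hu, mul_assoc, T.e1_idem]
  have huu : u * u = ((T.τ : ℝ) : ℂ) • u := by
    calc u * u = T.e1 * T.e2 * (T.e1 * T.e1) * T.e2 * T.e1 := by
          rw [hu]; simp only [mul_assoc]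
      _ = T.e1 * (T.e2 * T.e1 * T.e2) * T.e1 := by rw [T.e1_idem]; simp only [mul_assoc]
      _ = T.e1 * (((T.τ : ℝ) : ℂ) • T.e2) * T.e1 := by rw [T.s7_e2e1e2]
      _ = ((T.τ : ℝ) : ℂ) • u := by
          rw [mul_smul_comm, smul_mul_assoc, hu]
  have hidem : p * p = p := by
    have h4 : (a • u) * (a • u) = a • u := by
      rw [smul_mul_assoc, mul_smul_comm, huu, smul_smul, smul_smul]
      congr 1
      rw [ha]
      field_simp
    have h5 : T.e1 * (a • u) = a • u := by rw [mul_smul_comm, he1u]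
    have h6 : (a • u) * T.e1 = a • u := by rw [smul_mul_assoc, hue1]
    rw [hp, sub_mul, mul_sub, mul_sub, T.e1_idem, h4, h5, h6]
    abel
  have hE2p : T.E2.map p = 0 := by
    rw [hp, map_sub, map_smul, T.E2.fixes T.e1 T.e1_mem]
    have h2 : T.E2.map u = ((T.τ : ℝ) : ℂ) • T.e1 := by
      have h3 : u = T.e1 * T.e2 * T.e1 := hu
      rw [h3, T.E2.bimodule T.e1 T.e1_mem T.e1 T.e1_mem T.e2 T.e2_mem, T.E2_e2]
      rw [mul_smul_comm, smul_mul_assoc, mul_one, T.e1_idem]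
    rw [h2, smul_smul, ha, inv_mul_cancel₀ T.s7_tau_ne, one_smul, sub_self]
  have hzero : T.E2.map (star p * p) = 0 := by
    rw [hstarp, hidem, hE2p]
  have hp0 := s7_faith T.E2 T.hA1A2 hvq hpA2 hzero
  have : T.e1 = a • u := by
    have := sub_eq_zero.mp hp0
    exact this
  calc u = (((T.τ : ℝ) : ℂ) * a) • u := by
        rw [ha, mul_inv_cancel₀ T.s7_tau_ne, one_smul]
    _ = ((T.τ : ℝ) : ℂ) • (a • u) := by rw [mul_smul]
    _ = ((T.τ : ℝ) : ℂ) • T.e1 := by rw [← this]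

end JonesTower

section SqrtMem

variable {C : Type*} [CStarAlgebra C]

lemma s7_sqrt_mem [PartialOrder C] [StarOrderedRing C] (S : StarSubalgebra ℂ C)
    (hS : IsClosed (S : Set C)) {b : C} (hbS : b ∈ S) (hb : 0 ≤ b) :
    ∃ s ∈ S, star s * s = b := by
  have hsa : IsSelfAdjoint b := IsSelfAdjoint.of_nonneg hb
  have hn : IsStarNormal b := hsa.isStarNormal
  set f : C(spectrum ℂ b, ℂ) := ⟨fun z => ((Real.sqrt (z.1.re) : ℝ) : ℂ), by fun_prop⟩ with hf
  refine ⟨cfcHom hn f, ?_, ?_⟩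
  · have h1 : cfcHom hn f ∈ StarAlgebra.elemental ℂ b := by
      rw [cfcHom_eq_of_isStarNormal]
      exact ((continuousFunctionalCalculus b) f).2
    exact StarAlgebra.elemental.le_of_mem hS hbS h1
  · have h2 : star (cfcHom hn f) * cfcHom hn f = cfcHom hn (star f * f) := by
      rw [map_mul, map_star]
    rw [h2]
    have heq : star f * f = (ContinuousMap.id ℂ).restrict (spectrum ℂ b) := by
      ext z
      have hz := spectrum_nonneg_of_nonneg hb z.2
      rw [Complex.nonneg_iff] at hz
      simp only [hf, ContinuousMap.mul_apply, ContinuousMap.star_apply, ContinuousMap.coe_mk,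
        ContinuousMap.restrict_apply, ContinuousMap.id_apply]
      rw [Complex.star_def, Complex.conj_ofReal, ← Complex.ofReal_mul,
        Real.mul_self_sqrt hz.1]
      exact Complex.ext (by simp) (by simpa using hz.2)
    rw [heq, cfcHom_id]

end SqrtMem

section AlgMapR
variable {C : Type*} [CStarAlgebra C]
lemma s7_algebraMapR (r : ℝ) : algebraMap ℝ C r = ((r : ℝ) : ℂ) • (1 : C) := by
  rw [IsScalarTower.algebraMap_apply ℝ ℂ C, Algebra.algebraMap_eq_smul_one]
  norm_num
end AlgMapR

namespace JonesTower

variable {C : Type*} [CStarAlgebra C] (T : JonesTower C)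

lemma s7_A2_closed : IsClosed ((T.A2 : Set C)) := by
  rw [T.gen2]
  exact StarSubalgebra.isClosed_topologicalClosure _

lemma s7_E2_norm [Nontrivial C] [PartialOrder C] [StarOrderedRing C] :
    ∀ z ∈ T.A2, ‖T.E2.map z‖ ≤ ‖z‖ := by
  intro z hz
  have hzz : star z * z ∈ T.A2 := mul_mem (star_mem hz) hz
  have halgmem : algebraMap ℝ C ‖star z * z‖ ∈ T.A2 := by
    rw [s7_algebraMapR]
    exact SMulMemClass.smul_mem _ (one_mem _)
  have hb : (0:C) ≤ algebraMap ℝ C ‖star z * z‖ - star z * z := by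
    rw [sub_nonneg]
    exact IsSelfAdjoint.le_algebraMap_norm_self (IsSelfAdjoint.star_mul_self z)
  obtain ⟨s, hsS, hss⟩ := s7_sqrt_mem T.A2 T.s7_A2_closed (sub_mem halgmem hzz) hb
  obtain ⟨y1, hy1B, hy1e⟩ := T.E2.positive s hsS
  rw [hss] at hy1e
  have h2 : T.E2.map (star z * z) ≤ algebraMap ℝ C ‖star z * z‖ := by
    rw [← sub_nonneg]
    have h3 : algebraMap ℝ C ‖star z * z‖ - T.E2.map (star z * z)
        = T.E2.map (algebraMap ℝ C ‖star z * z‖ - star z * z) := by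
      rw [map_sub]
      congr 1
      rw [s7_algebraMapR, map_smul, T.E2.fixes 1 (one_mem _)]
    rw [h3, hy1e]
    exact star_mul_self_nonneg y1
  set m := T.E2.map z with hm
  have hmA1 : m ∈ T.A1 := T.E2.mem_of_mem z hz
  have hmA2 : m ∈ T.A2 := T.hA1A2 hmA1
  obtain ⟨y2, hy2B, hy2e⟩ := T.E2.positive (z - m) (sub_mem hz hmA2)
  have e1 : T.E2.map (star z * m) = star m * m := by
    have harg : star z * m = 1 * star z * m := by rw [one_mul]
    rw [harg, T.E2.bimodule 1 (one_mem _) m hmA1 (star z) (star_mem hz), one_mul,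
      T.E2.star_map z hz]
  have e2 : T.E2.map (star m * z) = star m * m := by
    have harg : star m * z = star m * z * 1 := by rw [mul_one]
    rw [harg, T.E2.bimodule (star m) (star_mem hmA1) 1 (one_mem _) z hz, mul_one, hm]
  have e3 : T.E2.map (star m * m) = star m * m :=
    T.E2.fixes _ (mul_mem (star_mem hmA1) hmA1)
  have hKS : T.E2.map (star z * z) - star m * m = star y2 * y2 := by
    rw [← hy2e]
    have harg : star (z - m) * (z - m) = star z * z - star z * m - (star m * z - star m * m) := by
      rw [star_sub, sub_mul, mul_sub, mul_sub]
    rw [harg, map_sub, map_sub, map_sub, e1, e2, e3]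
    abel
  have hle3 : star m * m ≤ algebraMap ℝ C ‖star z * z‖ := by
    refine le_trans ?_ h2
    rw [← sub_nonneg, hKS]
    exact star_mul_self_nonneg y2
  have hnorm1 : ‖star m * m‖ ≤ ‖star z * z‖ := by
    have := CStarAlgebra.norm_le_norm_of_nonneg_of_le (star_mul_self_nonneg m) hle3
    rw [s7_algebraMapR, norm_smul, Complex.norm_real, Real.norm_eq_abs,
      abs_of_nonneg (norm_nonneg _), norm_one, mul_one] at this
    exact this
  rw [CStarRing.norm_star_mul_self, CStarRing.norm_star_mul_self] at hnorm1
  nlinarith [norm_nonneg m, norm_nonneg z, hnorm1]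

lemma s7_e2_key : ∀ c ∈ T.A1, ∀ X : C, T.e2 * (c * (T.e2 * X)) = T.E1.map c * (T.e2 * X) := by
  intro c hc X
  have h := T.e2_jones c hc
  calc T.e2 * (c * (T.e2 * X)) = (T.e2 * c * T.e2) * X := by simp only [mul_assoc]
    _ = (T.E1.map c * T.e2) * X := by rw [h]
    _ = T.E1.map c * (T.e2 * X) := by simp only [mul_assoc]

/-- The pull-down identity. -/
lemma s7_PD [Nontrivial C] [PartialOrder C] [StarOrderedRing C] :
    ∀ z ∈ T.A2, T.e2 * z = (((T.τ : ℝ) : ℂ))⁻¹ • (T.e2 * T.E2.map (T.e2 * z)) := by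
  classical
  set c : ℂ := (((T.τ : ℝ) : ℂ))⁻¹ with hc
  set G : Set C := {t | ∃ a ∈ T.A1, ∃ b ∈ T.A1, t = a * (T.e2 * b)} with hG
  -- the submodule of elements satisfying pull-down
  set V : Submodule ℂ C :=
    { carrier := {z | T.e2 * z = c • (T.e2 * T.E2.map (T.e2 * z))}
      add_mem' := by
        intro x y hx hy
        simp only [Set.mem_setOf_eq] at hx hy ⊢
        calc T.e2 * (x + y) = T.e2 * x + T.e2 * y := mul_add _ _ _
          _ = (((T.τ : ℝ) : ℂ))⁻¹ • (T.e2 * T.E2.map (T.e2 * x))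
              + (((T.τ : ℝ) : ℂ))⁻¹ • (T.e2 * T.E2.map (T.e2 * y)) := by
                exact congrArg₂ (· + ·) hx hy
          _ = (((T.τ : ℝ) : ℂ))⁻¹ • (T.e2 * (T.E2.map (T.e2 * x) + T.E2.map (T.e2 * y))) := by
                rw [mul_add, smul_add]
          _ = (((T.τ : ℝ) : ℂ))⁻¹ • (T.e2 * T.E2.map (T.e2 * x + T.e2 * y)) := by rw [map_add]
          _ = (((T.τ : ℝ) : ℂ))⁻¹ • (T.e2 * T.E2.map (T.e2 * (x + y))) := by rw [mul_add]
      zero_mem' := by simp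
      smul_mem' := by
        intro r x hx
        simp only [Set.mem_setOf_eq] at hx ⊢
        calc T.e2 * (r • x) = r • (T.e2 * x) := mul_smul_comm r _ x
          _ = r • ((((T.τ : ℝ) : ℂ))⁻¹ • (T.e2 * T.E2.map (T.e2 * x))) := congrArg (r • ·) hx
          _ = (((T.τ : ℝ) : ℂ))⁻¹ • (T.e2 * T.E2.map (r • (T.e2 * x))) := by
                rw [map_smul, mul_smul_comm, smul_comm]
          _ = (((T.τ : ℝ) : ℂ))⁻¹ • (T.e2 * T.E2.map (T.e2 * (r • x))) := by
                rw [mul_smul_comm] } with hV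
  have hA1V : ∀ z ∈ T.A1, z ∈ V := by
    intro z hzA1
    show T.e2 * z = c • (T.e2 * T.E2.map (T.e2 * z))
    have h1 : T.E2.map (T.e2 * z) = ((T.τ : ℝ) : ℂ) • z := by
      have harg : T.e2 * z = 1 * T.e2 * z := by rw [one_mul]
      rw [harg, T.E2.bimodule 1 (one_mem _) z hzA1 T.e2 T.e2_mem, one_mul, T.E2_e2,
        smul_mul_assoc, one_mul]
    rw [h1, mul_smul_comm, smul_smul, hc, inv_mul_cancel₀ T.s7_tau_ne, one_smul]
  have hGV : ∀ t ∈ G, t ∈ V := by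
    rintro t ⟨a, ha, b, hb, rfl⟩
    show T.e2 * (a * (T.e2 * b)) = c • (T.e2 * T.E2.map (T.e2 * (a * (T.e2 * b))))
    rw [T.s7_e2_key a ha b]
    have hE1a : T.E1.map a ∈ T.A1 := T.hAA1 (T.E1.mem_of_mem a ha)
    have h1 : T.E2.map (T.E1.map a * (T.e2 * b)) = ((T.τ : ℝ) : ℂ) • (T.E1.map a * b) := by
      have harg : T.E1.map a * (T.e2 * b) = T.E1.map a * T.e2 * b := by rw [mul_assoc]
      rw [harg, T.E2.bimodule _ hE1a b hb T.e2 T.e2_mem, T.E2_e2, mul_smul_comm,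
        smul_mul_assoc, mul_one]
    rw [h1, mul_smul_comm, smul_smul, hc, inv_mul_cancel₀ T.s7_tau_ne, one_smul]
    have hcomm : T.e2 * T.E1.map a = T.E1.map a * T.e2 :=
      T.e2_comm _ (T.E1.mem_of_mem a ha)
    rw [s7_push hcomm]
  have hspanGV : Submodule.span ℂ G ≤ V := Submodule.span_le.mpr hGV
  -- the span of G is closed under various multiplications
  have hmulA1G : ∀ x ∈ T.A1, ∀ t ∈ Submodule.span ℂ G, x * t ∈ Submodule.span ℂ G := by
    intro x hx t ht
    induction ht using Submodule.span_induction with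
    | mem t ht =>
      obtain ⟨a, ha, b, hb, rfl⟩ := ht
      refine Submodule.subset_span ⟨x * a, mul_mem hx ha, b, hb, ?_⟩
      simp only [mul_assoc]
    | zero => rw [mul_zero]; exact zero_mem _
    | add y z hy hz hy' hz' => rw [mul_add]; exact add_mem hy' hz'
    | smul r y hy hy' => rw [mul_smul_comm]; exact Submodule.smul_mem _ _ hy'
  have hmulGA1 : ∀ t ∈ Submodule.span ℂ G, ∀ x ∈ T.A1, t * x ∈ Submodule.span ℂ G := by
    intro t ht x hx
    induction ht using Submodule.span_induction with
    | mem t ht =>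
      obtain ⟨a, ha, b, hb, rfl⟩ := ht
      refine Submodule.subset_span ⟨a, ha, b * x, mul_mem hb hx, ?_⟩
      simp only [mul_assoc]
    | zero => rw [zero_mul]; exact zero_mem _
    | add y z hy hz hy' hz' => rw [add_mul]; exact add_mem hy' hz'
    | smul r y hy hy' => rw [smul_mul_assoc]; exact Submodule.smul_mem _ _ hy'
  have hmulGG : ∀ t ∈ Submodule.span ℂ G, ∀ s ∈ Submodule.span ℂ G, t * s ∈ Submodule.span ℂ G := by
    intro t ht
    induction ht using Submodule.span_induction with
    | mem t ht =>
      intro s hs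
      induction hs using Submodule.span_induction with
      | mem s hsG =>
        obtain ⟨a, ha, b, hb, rfl⟩ := ht
        obtain ⟨a', ha', b', hb', rfl⟩ := hsG
        have key : (a * (T.e2 * b)) * (a' * (T.e2 * b'))
            = (a * T.E1.map (b * a')) * (T.e2 * b') := by
          have h1 : (a * (T.e2 * b)) * (a' * (T.e2 * b'))
              = a * (T.e2 * ((b * a') * (T.e2 * b'))) := by simp only [mul_assoc]
          rw [h1, T.s7_e2_key (b * a') (mul_mem hb ha') b']
          simp only [mul_assoc]
        rw [key]
        exact Submodule.subset_span ⟨a * T.E1.map (b * a'),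
          mul_mem ha (T.hAA1 (T.E1.mem_of_mem _ (mul_mem hb ha'))), b', hb', rfl⟩
      | zero => rw [mul_zero]; exact zero_mem _
      | add y z hy hz hy' hz' => rw [mul_add]; exact add_mem hy' hz'
      | smul r y hy hy' => rw [mul_smul_comm]; exact Submodule.smul_mem _ _ hy'
    | zero => intro s hs; rw [zero_mul]; exact zero_mem _
    | add y z hy hz hy' hz' => intro s hs; rw [add_mul]; exact add_mem (hy' s hs) (hz' s hs)
    | smul r y hy hy' => intro s hs; rw [smul_mul_assoc]; exact Submodule.smul_mem _ _ (hy' s hs)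
  have hstarG : ∀ t ∈ Submodule.span ℂ G, star t ∈ Submodule.span ℂ G := by
    intro t ht
    induction ht using Submodule.span_induction with
    | mem t ht =>
      obtain ⟨a, ha, b, hb, rfl⟩ := ht
      have hst : star (a * (T.e2 * b)) = star b * (T.e2 * star a) := by
        rw [star_mul, star_mul, T.e2_star]
        simp only [mul_assoc]
      rw [hst]
      exact Submodule.subset_span ⟨star b, star_mem hb, star a, star_mem ha, rfl⟩
    | zero => rw [star_zero]; exact zero_mem _
    | add y z hy hz hy' hz' => rw [star_add]; exact add_mem hy' hz'
    | smul r y hy hy' => rw [star_smul]; exact Submodule.smul_mem _ _ hy'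
  -- S0
  set S0 : Submodule ℂ C := (Subalgebra.toSubmodule T.A1.toSubalgebra) ⊔ Submodule.span ℂ G with hS0
  have hS0V : S0 ≤ V := by
    rw [hS0]
    refine sup_le ?_ hspanGV
    intro z hz
    exact hA1V z ((Subalgebra.mem_toSubmodule _).mp hz)
  have hadj : ∀ z ∈ StarAlgebra.adjoin ℂ ((T.A1 : Set C) ∪ {T.e2}), z ∈ S0 := by
    intro z hz
    induction hz using StarAlgebra.adjoin_induction with
    | mem x hx =>
      rcases hx with hx | hx
      · exact Submodule.mem_sup_left (by exact hx)
      · rcases hx with rfl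
        refine Submodule.mem_sup_right ?_
        exact Submodule.subset_span ⟨1, one_mem _, 1, one_mem _, by rw [one_mul, mul_one]⟩
    | algebraMap r =>
      exact Submodule.mem_sup_left
        ((Subalgebra.mem_toSubmodule _).mpr (algebraMap_mem T.A1.toSubalgebra r))
    | add x y hx hy hx' hy' => exact add_mem hx' hy'
    | mul x y hx hy hx' hy' =>
      rw [hS0] at hx' hy'
      obtain ⟨x1, hx1, x2, hx2, rfl⟩ := Submodule.mem_sup.mp hx'
      obtain ⟨y1, hy1, y2, hy2, rfl⟩ := Submodule.mem_sup.mp hy'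
      have hx1' : x1 ∈ T.A1 := hx1
      have hy1' : y1 ∈ T.A1 := hy1
      rw [add_mul, mul_add, mul_add]
      refine add_mem (add_mem ?_ ?_) (add_mem ?_ ?_)
      · exact Submodule.mem_sup_left ((Subalgebra.mem_toSubmodule _).mpr (mul_mem hx1' hy1'))
      · exact Submodule.mem_sup_right (hmulA1G x1 hx1' y2 hy2)
      · exact Submodule.mem_sup_right (hmulGA1 x2 hx2 y1 hy1')
      · exact Submodule.mem_sup_right (hmulGG x2 hx2 y2 hy2)
    | star x hx hx' =>
      rw [hS0] at hx'
      obtain ⟨x1, hx1, x2, hx2, rfl⟩ := Submodule.mem_sup.mp hx'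
      rw [star_add]
      refine add_mem (Submodule.mem_sup_left
        ((Subalgebra.mem_toSubmodule _).mpr (show star x1 ∈ T.A1 from star_mem (show x1 ∈ T.A1 from hx1))))
        (Submodule.mem_sup_right (hstarG x2 hx2))
  -- now approximate
  intro z hz
  have hz' : z ∈ closure ((StarAlgebra.adjoin ℂ ((T.A1 : Set C) ∪ {T.e2}) : Set C)) := by
    have := T.gen2 ▸ hz
    exact this
  obtain ⟨u, hu, hulim⟩ := mem_closure_iff_seq_limit.mp hz'
  have hadjA2 : ∀ t ∈ StarAlgebra.adjoin ℂ ((T.A1 : Set C) ∪ {T.e2}), t ∈ T.A2 := by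
    intro t ht
    rw [T.gen2]
    exact StarSubalgebra.le_topologicalClosure _ ht
  have hPDu : ∀ k : ℕ, T.e2 * u k = c • (T.e2 * T.E2.map (T.e2 * u k)) := by
    intro k
    exact hS0V (hadj (u k) (hu k))
  have hlim1 : Filter.Tendsto (fun k => T.e2 * u k) Filter.atTop (nhds (T.e2 * z)) :=
    (hulim.const_mul T.e2)
  have hlim2 : Filter.Tendsto (fun k => T.E2.map (T.e2 * u k)) Filter.atTop
      (nhds (T.E2.map (T.e2 * z))) := by
    rw [tendsto_iff_norm_sub_tendsto_zero]
    have hbound : ∀ k, ‖T.E2.map (T.e2 * u k) - T.E2.map (T.e2 * z)‖ ≤ ‖T.e2‖ * ‖u k - z‖ := by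
      intro k
      rw [← map_sub, ← mul_sub]
      refine le_trans (T.s7_E2_norm _ (mul_mem T.e2_mem (sub_mem (hadjA2 _ (hu k)) hz))) ?_
      exact norm_mul_le _ _
    refine squeeze_zero_norm (fun k => by simpa using hbound k) ?_
    have : Filter.Tendsto (fun k => ‖u k - z‖) Filter.atTop (nhds 0) := by
      rw [← tendsto_iff_norm_sub_tendsto_zero]
      exact hulim
    simpa using (this.const_mul ‖T.e2‖)
  have hlim3 : Filter.Tendsto (fun k => c • (T.e2 * T.E2.map (T.e2 * u k))) Filter.atTop
      (nhds (c • (T.e2 * T.E2.map (T.e2 * z)))) :=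
    ((hlim2.const_mul T.e2).const_smul c)
  have := tendsto_nhds_unique hlim1 (by
    have : (fun k => T.e2 * u k) = fun k => c • (T.e2 * T.E2.map (T.e2 * u k)) := funext hPDu
    rw [this]
    exact hlim3)
  exact this

end JonesTower

namespace JonesTower

variable {C : Type*} [CStarAlgebra C] (T : JonesTower C)

lemma s7_k_star : star T.k = T.k := by
  rw [k, star_sum]
  refine Finset.sum_congr rfl fun i _ => ?_
  rw [star_mul, star_star]

lemma s7_u_A1 (i : Fin T.nu) : T.u i ∈ T.A1 := (T.u_qb.mem i).1

lemma s7_k_A1 : T.k ∈ T.A1 := by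
  rw [k]
  exact sum_mem fun i _ => mul_mem (T.s7_u_A1 i) (star_mem (T.s7_u_A1 i))

lemma s7_k_commA : ∀ a ∈ T.A, a * T.k = T.k * a := by
  intro a ha
  have hterm : ∀ i : Fin T.nu, a * (T.u i * star (T.u i)) = (T.u i * star (T.u i)) * a := by
    intro i
    have h1 := (T.u_qb.mem i).2 a ha
    have h2 : a * star (T.u i) = star (T.u i) * a := by
      have h3 := congrArg star ((T.u_qb.mem i).2 (star a) (star_mem ha))
      rw [star_mul, star_mul, star_star] at h3
      exact h3.symm
    rw [← mul_assoc, h1, mul_assoc, h2, ← mul_assoc]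
  rw [k, Finset.mul_sum, Finset.sum_mul]
  exact Finset.sum_congr rfl fun i _ => hterm i

lemma s7_d_pos [Nontrivial C] [PartialOrder C] [StarOrderedRing C] : 0 < T.d := by
  obtain ⟨nq1, vq1, hvq1⟩ := T.qb1
  have hkk_mem : star T.k * T.k ∈ T.A2 :=
    mul_mem (T.hA1A2 (star_mem T.s7_k_A1)) (T.hA1A2 T.s7_k_A1)
  have hcommB : ∀ b ∈ T.B, b * (star T.k * T.k) = (star T.k * T.k) * b := by
    intro b hb
    have hbA : b ∈ T.A := T.hBA hb
    rw [T.s7_k_star, ← mul_assoc, T.s7_k_commA b hbA, mul_assoc, T.s7_k_commA b hbA, ← mul_assoc]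
  have htr := T.tr_def (star T.k * T.k) hkk_mem hcommB
  rw [T.E2.fixes _ (mul_mem (star_mem T.s7_k_A1) T.s7_k_A1)] at htr
  obtain ⟨y, hyA, hy⟩ := T.E1.positive T.k T.s7_k_A1
  rw [hy] at htr
  obtain ⟨z, hzB, hz⟩ := T.E0.positive y hyA
  rw [hz] at htr
  set c : ℂ := T.tr (star T.k * T.k) with hcdef
  -- c ≠ 0
  have hcne : c ≠ 0 := by
    intro hc0
    rw [hc0, zero_smul] at htr
    have hz0 : z = 0 := (CStarRing.star_mul_self_eq_zero_iff z).mp htr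
    rw [hz0, star_zero, zero_mul] at hz
    have hy0 : y = 0 := s7_faith T.E0 T.hBA T.lam_qb hyA hz
    rw [hy0, star_zero, zero_mul] at hy
    have hk0 : T.k = 0 := s7_faith T.E1 T.hAA1 hvq1 T.s7_k_A1 hy
    have h1 := T.kinv_k
    rw [show (∑ i, T.u i * star (T.u i)) = T.k from rfl, hk0, mul_zero] at h1
    exact one_ne_zero h1.symm
  -- c is real
  have hcreal : (starRingEnd ℂ) c = c := by
    have h1 := congrArg star htr
    rw [star_smul, star_one, star_mul, star_star] at h1
    rw [htr] at h1
    exact (s7_smul_one_inj (C := C) one_ne_zero h1).symm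
  have him : c.im = 0 := Complex.conj_eq_iff_im.mp hcreal
  have hre : c = ((c.re : ℝ) : ℂ) := by
    exact (Complex.conj_eq_iff_re.mp hcreal).symm
  -- c.re > 0
  have hpos : 0 ≤ c • (1:C) := by
    rw [← htr]
    exact star_mul_self_nonneg z
  have hrepos : 0 < c.re := by
    rcases lt_trichotomy c.re 0 with h | h | h
    · exfalso
      have hneg : (0:C) ≤ ((-c.re : ℝ) : ℂ) • (1:C) := by
        refine s7_rsmul_nonneg ⟨1, by rw [star_one, one_mul]⟩ (by linarith)
      have heq : ((-c.re : ℝ) : ℂ) • (1:C) = -(c • (1:C)) := by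
        rw [← neg_smul]
        congr 1
        exact Complex.ext (by simp) (by simp [him])
      rw [heq] at hneg
      have h0 : c • (1:C) = 0 := le_antisymm (by simpa using neg_nonneg.mp (by simpa using hneg)) hpos
      have : c = 0 := by
        refine s7_smul_one_inj (C := C) one_ne_zero ?_
        rw [h0, zero_smul]
      exact hcne this
    · exfalso
      apply hcne
      exact Complex.ext (by simp [h]) (by simp [him])
    · exact h
  rw [d]
  exact Real.sqrt_pos.mpr hrepos

lemma s7_const_ne [Nontrivial C] [PartialOrder C] [StarOrderedRing C] :
    (T.d : ℂ) * ((T.τ : ℂ)⁻¹) ^ 2 ≠ 0 := by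
  refine mul_ne_zero ?_ (pow_ne_zero _ (inv_ne_zero T.s7_tau_ne))
  simp only [ne_eq, Complex.ofReal_eq_zero]
  exact ne_of_gt T.s7_d_pos

end JonesTower

/-- Let `B ⊂ A` be an inclusion of simple unital C*-algebras with a
conditional expectation of index-finite type.  Then the Nikshych–Vainerman form
`⟨x, w⟩ = d τ⁻² tr(x e₂ e₁ w)` is a non-degenerate duality between `P = B' ∩ A₁` and
`Q = A' ∩ A₂`: if `⟨x, w⟩ = 0` for all `x ∈ P` then `w = 0`, and if `⟨x, w⟩ = 0` for
all `w ∈ Q` then `x = 0`. -/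
theorem statement_7 {C : Type*} [CStarAlgebra C] (T : JonesTower C) :
    (∀ w ∈ T.Q, (∀ x ∈ T.P, T.pairNV x w = 0) → w = 0)
    ∧ (∀ x ∈ T.P, (∀ w ∈ T.Q, T.pairNV x w = 0) → x = 0) := by
  rcases subsingleton_or_nontrivial C with hss | hnt
  · exact ⟨fun w _ _ => Subsingleton.elim w 0, fun x _ _ => Subsingleton.elim x 0⟩
  letI : PartialOrder C := CStarAlgebra.spectralOrder C
  letI : StarOrderedRing C := CStarAlgebra.spectralOrderedRing C
  have hconst := T.s7_const_ne
  have htauc := T.s7_tau_ne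
  constructor
  · -- non-degeneracy in the second variable
    intro w hwQ hpair
    have hwA2 : w ∈ T.A2 := (T.s7_memQ.mp hwQ).1
    have hwcomm := (T.s7_memQ.mp hwQ).2
    have htr0 : ∀ x ∈ T.P, T.tr (x * T.e2 * T.e1 * w) = 0 := by
      intro x hx
      have h1 := hpair x hx
      simp only [JonesTower.pairNV] at h1
      exact (mul_eq_zero.mp h1).resolve_left hconst
    set m := T.E2.map (T.e2 * (T.e1 * w)) with hm
    have he1wA2 : T.e1 * w ∈ T.A2 := mul_mem (T.hA1A2 T.e1_mem) hwA2
    have harg2 : T.e2 * (T.e1 * w) ∈ T.A2 := mul_mem T.e2_mem he1wA2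
    have hmA1 : m ∈ T.A1 := T.E2.mem_of_mem _ harg2
    have hmP : m ∈ T.P := by
      refine T.s7_memP.mpr ⟨hmA1, fun b hb => ?_⟩
      have hbA : b ∈ T.A := T.hBA hb
      have hbA1 : b ∈ T.A1 := T.hAA1 hbA
      have hcomm : b * (T.e2 * (T.e1 * w)) = (T.e2 * (T.e1 * w)) * b := by
        rw [s7_push (T.e2_comm b hbA).symm, s7_push (T.e1_comm b hb).symm, hwcomm b hbA]
        simp only [mul_assoc]
      have h1 := T.E2.bimodule b hbA1 1 (one_mem _) _ harg2
      rw [mul_one, mul_one] at h1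
      have h2 := T.E2.bimodule 1 (one_mem _) b hbA1 _ harg2
      rw [one_mul, one_mul] at h2
      rw [← hm] at h1 h2
      rw [← h1, hcomm, h2]
    have hEE : ∀ x ∈ T.P, T.E0.map (T.E1.map (x * m)) = 0 := by
      intro x hx
      have hxA1 := (T.s7_memP.mp hx).1
      have hzmem : x * T.e2 * T.e1 * w ∈ T.A2 :=
        mul_mem (mul_mem (mul_mem (T.hA1A2 hxA1) T.e2_mem) (T.hA1A2 T.e1_mem)) hwA2
      have hzcomm : ∀ b ∈ T.B, b * (x * T.e2 * T.e1 * w) = (x * T.e2 * T.e1 * w) * b := by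
        intro b hb
        have hbA : b ∈ T.A := T.hBA hb
        calc b * (x * T.e2 * T.e1 * w) = b * (x * (T.e2 * (T.e1 * w))) := by
              simp only [mul_assoc]
          _ = x * (T.e2 * (T.e1 * (b * w))) := by
              rw [s7_push ((T.s7_memP.mp hx).2 b hb), s7_push (T.e2_comm b hbA).symm,
                s7_push (T.e1_comm b hb).symm]
          _ = x * (T.e2 * (T.e1 * (w * b))) := by rw [hwcomm b hbA]
          _ = (x * T.e2 * T.e1 * w) * b := by simp only [mul_assoc]
      have htrd := T.tr_def _ hzmem hzcomm
      rw [htr0 x hx, zero_smul] at htrd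
      have hE2z : T.E2.map (x * T.e2 * T.e1 * w) = x * m := by
        have harg : x * T.e2 * T.e1 * w = x * (T.e2 * (T.e1 * w)) * 1 := by
          simp only [mul_assoc, mul_one]
        rw [harg, T.E2.bimodule x hxA1 1 (one_mem _) _ harg2, mul_one, hm]
      rw [hE2z] at htrd
      exact htrd
    have hm0 : m = 0 := T.s7_chain01 hmA1 (hEE (star m) (T.s7_starP hmP))
    have hPD := T.s7_PD (T.e1 * w) he1wA2
    rw [← hm, hm0, mul_zero, smul_zero] at hPD
    have h5 : star (T.e1 * w) * (T.e1 * w) = 0 := by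
      have h6 : star (T.e2 * (T.e1 * w)) * (T.e2 * (T.e1 * w)) = 0 := by
        rw [hPD]
        simp
      have hA : star (T.e2 * (T.e1 * w)) * (T.e2 * (T.e1 * w))
          = ((T.τ : ℝ) : ℂ) • (star (T.e1 * w) * (T.e1 * w)) := by
        have hL : star (T.e2 * (T.e1 * w)) * (T.e2 * (T.e1 * w))
            = star w * ((T.e1 * T.e2 * T.e1) * w) := by
          rw [star_mul, T.e2_star, star_mul, T.e1_star]
          calc (star w * T.e1 * T.e2) * (T.e2 * (T.e1 * w))
              = star w * (T.e1 * ((T.e2 * T.e2) * (T.e1 * w))) := by simp only [mul_assoc]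
            _ = star w * (T.e1 * (T.e2 * (T.e1 * w))) := by rw [T.e2_idem]
            _ = star w * ((T.e1 * T.e2 * T.e1) * w) := by simp only [mul_assoc]
        have hR : star (T.e1 * w) * (T.e1 * w) = star w * (T.e1 * w) := by
          rw [star_mul, T.e1_star]
          calc (star w * T.e1) * (T.e1 * w) = star w * ((T.e1 * T.e1) * w) := by
                simp only [mul_assoc]
            _ = star w * (T.e1 * w) := by rw [T.e1_idem]
        rw [hL, hR, T.s7_e1e2e1, smul_mul_assoc, mul_smul_comm]
      rw [hA] at h6
      exact (smul_eq_zero.mp h6).resolve_left htauc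
    have he1w : T.e1 * w = 0 := (CStarRing.star_mul_self_eq_zero_iff _).mp h5
    calc w = 1 * w := (one_mul w).symm
      _ = (∑ i, T.lam i * T.e1 * star (T.lam i)) * w := by rw [T.s7_fsum]
      _ = ∑ i, (T.lam i * T.e1 * star (T.lam i)) * w := Finset.sum_mul _ _ _
      _ = 0 := by
          refine Finset.sum_eq_zero fun i _ => ?_
          have hsl : star (T.lam i) * w = w * star (T.lam i) :=
            hwcomm _ (star_mem (T.lam_qb.mem i))
          calc (T.lam i * T.e1 * star (T.lam i)) * w
              = T.lam i * (T.e1 * (star (T.lam i) * w)) := by simp only [mul_assoc]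
            _ = T.lam i * (T.e1 * (w * star (T.lam i))) := by rw [hsl]
            _ = T.lam i * ((T.e1 * w) * star (T.lam i)) := by simp only [mul_assoc]
            _ = 0 := by rw [he1w, zero_mul, mul_zero]
  · -- non-degeneracy in the first variable
    intro x hxP hpair
    have hxA1 := (T.s7_memP.mp hxP).1
    have hsxP := T.s7_starP hxP
    have hsxA1 : star x ∈ T.A1 := star_mem hxA1
    set w0 := ∑ i, T.lam i * (T.e1 * (T.e2 * (star x * star (T.lam i)))) with hw0
    have hw0A2 : w0 ∈ T.A2 := by
      refine sum_mem fun i _ => ?_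
      exact mul_mem (T.hA1A2 (T.s7_lam_A1 i)) (mul_mem (T.hA1A2 T.e1_mem)
        (mul_mem T.e2_mem (T.hA1A2 (mul_mem hsxA1 (star_mem (T.s7_lam_A1 i))))))
    have hpushB : ∀ b ∈ T.B, ∀ c : C,
        b * (T.e1 * (T.e2 * (star x * c))) = T.e1 * (T.e2 * (star x * (b * c))) := by
      intro b hb c
      rw [s7_push (T.e1_comm b hb).symm, s7_push (T.e2_comm b (T.hBA hb)).symm,
        s7_push ((T.s7_memP.mp hsxP).2 b hb)]
    have hw0Q : w0 ∈ T.Q := by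
      refine T.s7_memQ.mpr ⟨hw0A2, fun a ha => ?_⟩
      calc a * w0 = ∑ i, a * (T.lam i * (T.e1 * (T.e2 * (star x * star (T.lam i))))) := by
            rw [hw0, Finset.mul_sum]
        _ = ∑ i, ∑ j, T.lam j * (T.e1 * (T.e2 * (star x *
              (T.E0.map (star (T.lam j) * (a * T.lam i)) * star (T.lam i))))) := by
            refine Finset.sum_congr rfl fun i _ => ?_
            have hqb := T.lam_qb.left (a * T.lam i) (mul_mem ha (T.lam_qb.mem i))
            calc a * (T.lam i * (T.e1 * (T.e2 * (star x * star (T.lam i)))))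
                = (a * T.lam i) * (T.e1 * (T.e2 * (star x * star (T.lam i)))) := by
                  rw [mul_assoc]
              _ = (∑ j, T.lam j * T.E0.map (star (T.lam j) * (a * T.lam i)))
                    * (T.e1 * (T.e2 * (star x * star (T.lam i)))) := by rw [hqb]
              _ = ∑ j, (T.lam j * T.E0.map (star (T.lam j) * (a * T.lam i)))
                    * (T.e1 * (T.e2 * (star x * star (T.lam i)))) := Finset.sum_mul _ _ _
              _ = ∑ j, T.lam j * (T.e1 * (T.e2 * (star x *
                    (T.E0.map (star (T.lam j) * (a * T.lam i)) * star (T.lam i))))) := by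
                  refine Finset.sum_congr rfl fun j _ => ?_
                  have hbB : T.E0.map (star (T.lam j) * (a * T.lam i)) ∈ T.B :=
                    T.E0.mem_of_mem _ (mul_mem (star_mem (T.lam_qb.mem j))
                      (mul_mem ha (T.lam_qb.mem i)))
                  rw [mul_assoc, hpushB _ hbB]
        _ = ∑ j, T.lam j * (T.e1 * (T.e2 * (star x * (star (T.lam j) * a)))) := by
            rw [Finset.sum_comm]
            refine Finset.sum_congr rfl fun j _ => ?_
            have hqbr := T.lam_qb.right (star (T.lam j) * a)
              (mul_mem (star_mem (T.lam_qb.mem j)) ha)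
            calc (∑ i, T.lam j * (T.e1 * (T.e2 * (star x *
                  (T.E0.map (star (T.lam j) * (a * T.lam i)) * star (T.lam i))))))
                = T.lam j * (T.e1 * (T.e2 * (star x *
                    (∑ i, T.E0.map ((star (T.lam j) * a) * T.lam i) * star (T.lam i))))) := by
                  rw [Finset.mul_sum, Finset.mul_sum, Finset.mul_sum, Finset.mul_sum]
                  refine Finset.sum_congr rfl fun i _ => ?_
                  rw [mul_assoc (star (T.lam j)) a (T.lam i)]
              _ = T.lam j * (T.e1 * (T.e2 * (star x * (star (T.lam j) * a)))) := by rw [hqbr]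
        _ = w0 * a := by
            rw [hw0, Finset.sum_mul]
            refine Finset.sum_congr rfl fun j _ => ?_
            simp only [mul_assoc]
    -- use the pairing against w0
    have h1 := hpair w0 hw0Q
    simp only [JonesTower.pairNV] at h1
    have htr0 : T.tr (x * T.e2 * T.e1 * w0) = 0 := (mul_eq_zero.mp h1).resolve_left hconst
    have hzmem : x * T.e2 * T.e1 * w0 ∈ T.A2 :=
      mul_mem (mul_mem (mul_mem (T.hA1A2 hxA1) T.e2_mem) (T.hA1A2 T.e1_mem)) hw0A2
    have hw0comm := (T.s7_memQ.mp hw0Q).2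
    have hzcomm : ∀ b ∈ T.B, b * (x * T.e2 * T.e1 * w0) = (x * T.e2 * T.e1 * w0) * b := by
      intro b hb
      have hbA : b ∈ T.A := T.hBA hb
      calc b * (x * T.e2 * T.e1 * w0) = b * (x * (T.e2 * (T.e1 * w0))) := by
            simp only [mul_assoc]
        _ = x * (T.e2 * (T.e1 * (b * w0))) := by
            rw [s7_push ((T.s7_memP.mp hxP).2 b hb), s7_push (T.e2_comm b hbA).symm,
              s7_push (T.e1_comm b hb).symm]
        _ = x * (T.e2 * (T.e1 * (w0 * b))) := by rw [hw0comm b hbA]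
        _ = (x * T.e2 * T.e1 * w0) * b := by simp only [mul_assoc]
    have htrd := T.tr_def _ hzmem hzcomm
    rw [htr0, zero_smul] at htrd
    -- compute E2 (e2 * (e1 * w0))
    have hkey : T.E2.map (T.e2 * (T.e1 * w0)) = (((T.τ : ℝ) : ℂ) ^ 2) • star x := by
      have hstep : T.e2 * (T.e1 * w0)
          = ∑ i, ((T.τ : ℝ) : ℂ) • (T.E0.map (T.lam i) * (T.e2 * (star x * star (T.lam i)))) := by
        rw [hw0, Finset.mul_sum, Finset.mul_sum]
        refine Finset.sum_congr rfl fun i _ => ?_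
        have h2 : T.e1 * (T.lam i * (T.e1 * (T.e2 * (star x * star (T.lam i)))))
            = T.E0.map (T.lam i) * (T.e1 * (T.e2 * (star x * star (T.lam i)))) :=
          T.s7_e1_key (T.lam i) (T.lam_qb.mem i) _
        have hb0 : T.E0.map (T.lam i) ∈ T.A := T.hBA (T.E0.mem_of_mem _ (T.lam_qb.mem i))
        have h3 : T.e2 * (T.e1 * (T.e2 * (star x * star (T.lam i))))
            = ((T.τ : ℝ) : ℂ) • (T.e2 * (star x * star (T.lam i))) := by
          calc T.e2 * (T.e1 * (T.e2 * (star x * star (T.lam i))))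
              = (T.e2 * T.e1 * T.e2) * (star x * star (T.lam i)) := by simp only [mul_assoc]
            _ = (((T.τ : ℝ) : ℂ) • T.e2) * (star x * star (T.lam i)) := by rw [T.s7_e2e1e2]
            _ = ((T.τ : ℝ) : ℂ) • (T.e2 * (star x * star (T.lam i))) := by
                rw [smul_mul_assoc]
        calc T.e2 * (T.e1 * (T.lam i * (T.e1 * (T.e2 * (star x * star (T.lam i))))))
            = T.e2 * (T.E0.map (T.lam i) * (T.e1 * (T.e2 * (star x * star (T.lam i))))) := by
              rw [h2]
          _ = T.E0.map (T.lam i) * (T.e2 * (T.e1 * (T.e2 * (star x * star (T.lam i))))) :=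
              s7_push (T.e2_comm _ hb0)
          _ = T.E0.map (T.lam i) * (((T.τ : ℝ) : ℂ) • (T.e2 * (star x * star (T.lam i)))) := by
              rw [h3]
          _ = ((T.τ : ℝ) : ℂ) • (T.E0.map (T.lam i) * (T.e2 * (star x * star (T.lam i)))) :=
              mul_smul_comm _ _ _
      rw [hstep, map_sum]
      have hterm : ∀ i, T.E2.map (((T.τ : ℝ) : ℂ) •
          (T.E0.map (T.lam i) * (T.e2 * (star x * star (T.lam i)))))
          = (((T.τ : ℝ) : ℂ) ^ 2) • (star x * (T.E0.map (T.lam i) * star (T.lam i))) := by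
        intro i
        rw [map_smul]
        have hb1 : T.E0.map (T.lam i) ∈ T.A1 := T.hAA1 (T.hBA (T.E0.mem_of_mem _ (T.lam_qb.mem i)))
        have hb2 : star x * star (T.lam i) ∈ T.A1 := mul_mem hsxA1 (star_mem (T.s7_lam_A1 i))
        have harg : T.E0.map (T.lam i) * (T.e2 * (star x * star (T.lam i)))
            = T.E0.map (T.lam i) * T.e2 * (star x * star (T.lam i)) := by rw [mul_assoc]
        rw [harg, T.E2.bimodule _ hb1 _ hb2 T.e2 T.e2_mem, T.E2_e2]
        have hBcomm : T.E0.map (T.lam i) * star x = star x * T.E0.map (T.lam i) :=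
          (T.s7_memP.mp hsxP).2 _ (T.E0.mem_of_mem _ (T.lam_qb.mem i))
        rw [mul_smul_comm, mul_one, smul_mul_assoc, smul_smul, s7_push hBcomm, ← pow_two]
      rw [Finset.sum_congr rfl fun i _ => hterm i, ← Finset.smul_sum, ← Finset.mul_sum]
      have hone := T.lam_qb.right 1 (one_mem _)
      simp only [one_mul] at hone
      rw [hone, mul_one]
    have hE2z : T.E2.map (x * T.e2 * T.e1 * w0) = (((T.τ : ℝ) : ℂ) ^ 2) • (x * star x) := by
      have harg : x * T.e2 * T.e1 * w0 = x * (T.e2 * (T.e1 * w0)) * 1 := by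
        simp only [mul_assoc, mul_one]
      have hargmem : T.e2 * (T.e1 * w0) ∈ T.A2 :=
        mul_mem T.e2_mem (mul_mem (T.hA1A2 T.e1_mem) hw0A2)
      rw [harg, T.E2.bimodule x hxA1 1 (one_mem _) _ hargmem, mul_one, hkey, mul_smul_comm]
    rw [hE2z, map_smul, map_smul] at htrd
    have hxx : T.E0.map (T.E1.map (x * star x)) = 0 := by
      have := (smul_eq_zero.mp htrd).resolve_left (pow_ne_zero _ htauc)
      exact this
    have hsx0 : star x = 0 := by
      refine T.s7_chain01 hsxA1 ?_
      rw [star_star]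
      exact hxx
    rw [← star_star x, hsx0, star_zero]
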